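/- The cochain DG algebra B₆ with underlying graded algebra k⟨x₁,x₂⟩ (generators in degree 1) and differential given by ∂(x₁) = x₂², ∂(x₂) = 0 has cohomology: H⁰ = k, H^{2n−1}(B₆) = k·⌈x₂(x₁x₂+x₂x₁)^{n−1}⌉ and H^{2n}(B₆) = k·⌈(x₁x₂+x₂x₁)^n⌉ for all n ≥ 1; moreover the classes of x₂ and of x₁x₂+x₂x₁ commute in H(B₆), and H(B₆) ≅ k[⌈x₂⌉, ⌈x₁x₂+x₂x₁⌉]/(⌈x₂⌉²). -/

import Mathlib

/-- The degree-`i` homogeneous component of the free algebra `k⟨x_1,...,x_n⟩`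
with all generators in degree `1`: the span of the words of length `i`. -/
noncomputable def deg (k : Type*) [CommRing k] (n : ℕ) (i : ℕ) :
    Submodule k (FreeAlgebra k (Fin n)) :=
  Submodule.span k
    {w | ∃ f : Fin i → Fin n, w = (List.ofFn fun j => FreeAlgebra.ι k (f j)).prod}

/-- The first generator `x₁`. -/
noncomputable def X (k : Type*) [CommRing k] : FreeAlgebra k (Fin 2) := FreeAlgebra.ι k 0

/-- The second generator `x₂`. -/
noncomputable def Y (k : Type*) [CommRing k] : FreeAlgebra k (Fin 2) := FreeAlgebra.ι k 1

/-- The degree-2 cocycle `x₁x₂ + x₂x₁` of `B₆`. -/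
noncomputable def Q (k : Type*) [CommRing k] : FreeAlgebra k (Fin 2) := X k * Y k + Y k * X k

section Aux

variable {k : Type*} [Field k]

/- ## Coefficient extraction in the monoid algebra -/

lemma coeff_zero_of (f g : MonoidAlgebra k (FreeMonoid (Fin 2))) (i j : Fin 2) (hij : i ≠ j)
    (h : MonoidAlgebra.single (FreeMonoid.of i) 1 * f
        + MonoidAlgebra.single (FreeMonoid.of j) 1 * g = 0) (m : FreeMonoid (Fin 2)) :
    f.coeff m = 0 := by
  have hA : (MonoidAlgebra.single (FreeMonoid.of i) 1 * f).coeff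
      (FreeMonoid.of i * m) = 1 * f.coeff m :=
    MonoidAlgebra.coeff_single_mul_eq_mul_coeff m (fun a _ =>
      ⟨fun hh => mul_left_cancel hh, fun hh => by rw [hh]⟩)
  have hB : (MonoidAlgebra.single (FreeMonoid.of j) 1 * g).coeff
      (FreeMonoid.of i * m) = 0 :=
    MonoidAlgebra.single_mul_apply_of_not_exists_mul 1 g (by
      rintro ⟨dd, hdd⟩
      have h2 := congrArg FreeMonoid.toList hdd
      rw [FreeMonoid.toList_of_mul, FreeMonoid.toList_of_mul] at h2
      exact hij (List.head_eq_of_cons_eq h2))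
  calc f.coeff m = 1 * f.coeff m := (one_mul _).symm
    _ = (MonoidAlgebra.single (FreeMonoid.of i) 1 * f).coeff
        (FreeMonoid.of i * m) := hA.symm
    _ = (MonoidAlgebra.single (FreeMonoid.of i) 1 * f).coeff
        (FreeMonoid.of i * m) + 0 := (add_zero _).symm
    _ = (MonoidAlgebra.single (FreeMonoid.of i) 1 * f).coeff
        (FreeMonoid.of i * m)
        + (MonoidAlgebra.single (FreeMonoid.of j) 1 * g).coeff
        (FreeMonoid.of i * m) := by rw [hB]
    _ = (MonoidAlgebra.single (FreeMonoid.of i) 1 * f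
        + MonoidAlgebra.single (FreeMonoid.of j) 1 * g).coeff
        (FreeMonoid.of i * m) := (Finsupp.add_apply _ _ _).symm
    _ = (0 : MonoidAlgebra k (FreeMonoid (Fin 2))).coeff (FreeMonoid.of i * m) := by rw [h]
    _ = 0 := rfl

lemma e_iota (i : Fin 2) :
    FreeAlgebra.equivMonoidAlgebraFreeMonoid (FreeAlgebra.ι k i)
      = MonoidAlgebra.single (FreeMonoid.of i) 1 := by
  simp [FreeAlgebra.equivMonoidAlgebraFreeMonoid, MonoidAlgebra.of_apply]

lemma key_inj (u v : FreeAlgebra k (Fin 2)) (h : X k * u + Y k * v = 0) : u = 0 ∧ v = 0 := by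
  set e := (FreeAlgebra.equivMonoidAlgebraFreeMonoid :
    FreeAlgebra k (Fin 2) ≃ₐ[k] MonoidAlgebra k (FreeMonoid (Fin 2))) with he
  have h0 : e (X k * u + Y k * v) = 0 := by rw [h]; exact map_zero e
  rw [map_add, map_mul, map_mul] at h0
  rw [show e (X k) = MonoidAlgebra.single (FreeMonoid.of (0 : Fin 2)) 1 from e_iota 0,
      show e (Y k) = MonoidAlgebra.single (FreeMonoid.of (1 : Fin 2)) 1 from e_iota 1] at h0
  have hu : e u = 0 := MonoidAlgebra.ext <| Finsupp.ext fun m => coeff_zero_of (e u) (e v) 0 1 (by decide) h0 m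
  have hv : e v = 0 := MonoidAlgebra.ext <| Finsupp.ext fun m => coeff_zero_of (e v) (e u) 1 0 (by decide)
    (by rw [add_comm] at h0; exact h0) m
  exact ⟨by simpa using congrArg e.symm hu, by simpa using congrArg e.symm hv⟩

lemma compXY {u v u' v' : FreeAlgebra k (Fin 2)}
    (h : X k * u + Y k * v = X k * u' + Y k * v') : u = u' ∧ v = v' := by
  have h0 : X k * (u - u') + Y k * (v - v') = 0 := by
    rw [mul_sub, mul_sub, sub_add_sub_comm, h, sub_self]
  obtain ⟨h1, h2⟩ := key_inj _ _ h0
  exact ⟨sub_eq_zero.mp h1, sub_eq_zero.mp h2⟩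

lemma Y_ne_zero : (Y k) ≠ 0 := FreeAlgebra.ι_ne_zero _

/- ## deg membership -/

lemma one_mem_deg0 : (1 : FreeAlgebra k (Fin 2)) ∈ deg k 2 0 :=
  Submodule.subset_span ⟨Fin.elim0, by simp⟩

lemma mem_deg0 {a : FreeAlgebra k (Fin 2)} (h : a ∈ deg k 2 0) : ∃ c : k, a = c • 1 := by
  have hle : deg k 2 0 ≤ k ∙ (1 : FreeAlgebra k (Fin 2)) := by
    rw [deg, Submodule.span_le]
    rintro w ⟨f, rfl⟩
    simp only [List.ofFn_zero, List.prod_nil]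
    exact Submodule.mem_span_singleton_self _
  obtain ⟨c, hc⟩ := (Submodule.mem_span_singleton).mp (hle h)
  exact ⟨c, hc.symm⟩

lemma X_mem : X k ∈ deg k 2 1 :=
  Submodule.subset_span ⟨fun _ => 0, by simp [X]⟩

lemma Y_mem : Y k ∈ deg k 2 1 :=
  Submodule.subset_span ⟨fun _ => 1, by simp [Y]⟩

lemma deg_mul_mem {p q : ℕ} {a b : FreeAlgebra k (Fin 2)}
    (ha : a ∈ deg k 2 p) (hb : b ∈ deg k 2 q) : a * b ∈ deg k 2 (p + q) := by
  induction ha using Submodule.span_induction with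
  | mem w hw =>
    obtain ⟨f, rfl⟩ := hw
    induction hb using Submodule.span_induction with
    | mem w' hw' =>
      obtain ⟨g, rfl⟩ := hw'
      apply Submodule.subset_span
      refine ⟨Fin.append f g, ?_⟩
      have hfg : (fun j => FreeAlgebra.ι k (Fin.append f g j))
          = Fin.append (fun j => FreeAlgebra.ι k (f j)) (fun j => FreeAlgebra.ι k (g j)) := by
        funext j
        induction j using Fin.addCases with
        | left i => rw [Fin.append_left, Fin.append_left]
        | right i => rw [Fin.append_right, Fin.append_right]
      rw [hfg, List.ofFn_fin_append, List.prod_append]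
    | zero => simpa using Submodule.zero_mem _
    | add y z _ _ hy hz => simpa [mul_add] using Submodule.add_mem _ hy hz
    | smul c y _ hy => simpa [mul_smul_comm] using Submodule.smul_mem _ c hy
  | zero => simpa using Submodule.zero_mem _
  | add y z _ _ hy hz => simpa [add_mul] using Submodule.add_mem _ hy hz
  | smul c y _ hy => simpa [smul_mul_assoc] using Submodule.smul_mem _ c hy

lemma Q_mem : Q k ∈ deg k 2 2 := by
  have := Submodule.add_mem _ (deg_mul_mem (k := k) X_mem Y_mem) (deg_mul_mem (k := k) Y_mem X_mem)
  simpa [Q] using this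

lemma Qpow_mem (m : ℕ) : Q k ^ m ∈ deg k 2 (2 * m) := by
  induction m with
  | zero => simpa using one_mem_deg0
  | succ n ih =>
    have := deg_mul_mem (k := k) Q_mem ih
    rw [pow_succ']
    have h2 : 2 + 2 * n = 2 * (n + 1) := by ring
    rwa [h2] at this

lemma YQpow_mem (m : ℕ) : Y k * Q k ^ m ∈ deg k 2 (2 * m + 1) := by
  have := deg_mul_mem (k := k) Y_mem (Qpow_mem m)
  rwa [show 1 + 2 * m = 2 * m + 1 by ring] at this

lemma XQpow_mem (m : ℕ) : X k * Q k ^ m ∈ deg k 2 (2 * m + 1) := by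
  have := deg_mul_mem (k := k) X_mem (Qpow_mem m)
  rwa [show 1 + 2 * m = 2 * m + 1 by ring] at this

lemma decomp {m : ℕ} {a : FreeAlgebra k (Fin 2)} (h : a ∈ deg k 2 (m + 1)) :
    ∃ u v, u ∈ deg k 2 m ∧ v ∈ deg k 2 m ∧ a = X k * u + Y k * v := by
  induction h using Submodule.span_induction with
  | mem w hw =>
    obtain ⟨f, rfl⟩ := hw
    have hcons : (List.ofFn fun j => FreeAlgebra.ι k (f j)).prod
        = FreeAlgebra.ι k (f 0) * (List.ofFn fun j : Fin m => FreeAlgebra.ι k (f j.succ)).prod := by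
      rw [List.ofFn_succ, List.prod_cons]
    have htail : (List.ofFn fun j : Fin m => FreeAlgebra.ι k (f j.succ)).prod ∈ deg k 2 m :=
      Submodule.subset_span ⟨fun j => f j.succ, rfl⟩
    match hf0 : f 0 with
    | 0 =>
      refine ⟨_, 0, htail, Submodule.zero_mem _, ?_⟩
      rw [hcons, hf0]; simp [X]
    | 1 =>
      refine ⟨0, _, Submodule.zero_mem _, htail, ?_⟩
      rw [hcons, hf0]; simp [Y]
  | zero => exact ⟨0, 0, Submodule.zero_mem _, Submodule.zero_mem _, by simp⟩
  | add y z _ _ hy hz =>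
    obtain ⟨u1, v1, hu1, hv1, rfl⟩ := hy
    obtain ⟨u2, v2, hu2, hv2, rfl⟩ := hz
    exact ⟨u1 + u2, v1 + v2, Submodule.add_mem _ hu1 hu2, Submodule.add_mem _ hv1 hv2, by
      noncomm_ring⟩
  | smul c y _ hy =>
    obtain ⟨u, v, hu, hv, rfl⟩ := hy
    exact ⟨c • u, c • v, Submodule.smul_mem _ c hu, Submodule.smul_mem _ c hv, by
      simp [smul_add, mul_smul_comm]⟩

end Aux

section Diff

variable {k : Type*} [Field k]
variable (d : FreeAlgebra k (Fin 2) →ₗ[k] FreeAlgebra k (Fin 2))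
  (hL : ∀ (p : ℕ) (a b : FreeAlgebra k (Fin 2)), a ∈ deg k 2 p →
      d (a * b) = d a * b + ((-1 : k) ^ p) • (a * d b))
  (h1 : d (X k) = Y k * Y k)
  (h2 : d (Y k) = 0)

include hL in
lemma d_one : d 1 = 0 := by
  have := hL 0 1 1 one_mem_deg0
  simpa using this

include hL in
lemma d_deg0 {a : FreeAlgebra k (Fin 2)} (ha : a ∈ deg k 2 0) : d a = 0 := by
  obtain ⟨c, rfl⟩ := mem_deg0 ha
  rw [map_smul, smul_eq_zero]
  exact Or.inr (d_one d hL)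

include hL h1 in
lemma d_X_mul (u : FreeAlgebra k (Fin 2)) : d (X k * u) = Y k * (Y k * u) - X k * d u := by
  have := hL 1 (X k) u X_mem
  rw [h1] at this
  rw [this]
  simp [sub_eq_add_neg, mul_assoc]

include hL h2 in
lemma d_Y_mul (u : FreeAlgebra k (Fin 2)) : d (Y k * u) = -(Y k * d u) := by
  have := hL 1 (Y k) u Y_mem
  rw [h2] at this
  rw [this]
  simp

include hL h1 h2 in
lemma d_Q : d (Q k) = 0 := by
  have hx : d (X k * Y k) = Y k * (Y k * Y k) := by
    rw [d_X_mul d hL h1, h2]; simp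
  have hy : d (Y k * X k) = -(Y k * (Y k * Y k)) := by
    rw [d_Y_mul d hL h2, h1]
  rw [Q, map_add, hx, hy, add_neg_cancel]

include hL h1 h2 in
lemma d_Qpow (m : ℕ) : d (Q k ^ m) = 0 := by
  induction m with
  | zero => rw [pow_zero]; exact d_one d hL
  | succ n ih =>
    rw [pow_succ', hL 2 (Q k) (Q k ^ n) Q_mem, d_Q d hL h1 h2, ih]
    simp

include hL h1 h2 in
lemma d_X_Qpow (m : ℕ) : d (X k * Q k ^ m) = Y k * (Y k * Q k ^ m) := by
  rw [d_X_mul d hL h1, d_Qpow d hL h1 h2]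
  simp

include hL h1 h2 in
lemma d_Y_Qpow (m : ℕ) : d (Y k * Q k ^ m) = 0 := by
  rw [d_Y_mul d hL h2, d_Qpow d hL h1 h2]
  simp

include hL h1 h2 in
lemma d_split (u v : FreeAlgebra k (Fin 2)) :
    d (X k * u + Y k * v) = X k * (-(d u)) + Y k * (Y k * u - d v) := by
  rw [map_add, d_X_mul d hL h1, d_Y_mul d hL h2]
  simp only [mul_sub, mul_neg]
  abel

include hL h1 h2 in
lemma hQexp (c : k) (n : ℕ) :
    c • (Q k ^ (n+1)) = X k * (c • (Y k * Q k ^ n)) + Y k * (c • (X k * Q k ^ n)) := by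
  rw [pow_succ', Q]
  simp only [add_mul, mul_assoc, smul_add, mul_smul_comm]

include hL h1 h2 in
lemma bodd : ∀ m : ℕ, ∀ c : k, ∀ b ∈ deg k 2 (2 * m), d b = c • (Y k * Q k ^ m) → c = 0 := by
  intro m
  induction m with
  | zero =>
    intro c b hb hdb
    rw [d_deg0 d hL hb] at hdb
    rcases smul_eq_zero.mp hdb.symm with h | h
    · exact h
    · exact absurd (by simpa using h) (Y_ne_zero (k := k))
  | succ n ih =>
    intro c b hb hdb
    have hb' : b ∈ deg k 2 ((2 * n + 1) + 1) := by
      rwa [show (2 * n + 1) + 1 = 2 * (n + 1) by ring]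
    obtain ⟨s, t, hs, ht, rfl⟩ := decomp hb'
    rw [d_split d hL h1 h2] at hdb
    have hr : c • (Y k * Q k ^ (n+1)) = X k * 0 + Y k * (c • Q k ^ (n+1)) := by
      simp [mul_smul_comm]
    rw [hr] at hdb
    obtain ⟨hx, hy⟩ := compXY hdb
    have ht' : t ∈ deg k 2 ((2 * n) + 1) := ht
    obtain ⟨t1, t2, ht1, ht2, rfl⟩ := decomp ht'
    rw [d_split d hL h1 h2] at hy
    have hy3 : X k * (d t1) + Y k * (s - (Y k * t1 - d t2))
        = X k * (c • (Y k * Q k ^ n)) + Y k * (c • (X k * Q k ^ n)) := by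
      rw [← hQexp d hL h1 h2, ← hy]
      simp only [mul_sub, mul_neg, mul_add]
      abel
    exact ih c t1 ht1 (compXY hy3).1

include hL h1 h2 in
lemma beven : ∀ m : ℕ, ∀ c : k, ∀ b ∈ deg k 2 (2 * m + 1), d b = c • Q k ^ (m+1) → c = 0 := by
  intro m c b hb hdb
  obtain ⟨s, t, hs, ht, rfl⟩ := decomp hb
  rw [d_split d hL h1 h2, hQexp d hL h1 h2] at hdb
  obtain ⟨hx, _⟩ := compXY hdb
  exact bodd d hL h1 h2 m c (-s) (Submodule.neg_mem _ hs) (by rw [map_neg, hx])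

include hL h1 h2 in
lemma aeven_of_aodd (n : ℕ)
    (IH : ∀ a ∈ deg k 2 (2 * n + 1), d a = 0 →
      ∃ c : k, ∃ b, b ∈ deg k 2 (2 * n) ∧ a = c • (Y k * Q k ^ n) + d b) :
    ∀ a ∈ deg k 2 (2 * n + 1 + 1), d a = 0 →
      ∃ c : k, ∃ b, b ∈ deg k 2 (2 * n + 1) ∧ a = c • Q k ^ (n+1) + d b := by
  intro a ha hda
  obtain ⟨u, v, hu, hv, rfl⟩ := decomp ha
  have hda' : X k * (-(d u)) + Y k * (Y k * u - d v) = X k * 0 + Y k * 0 := by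
    rw [← d_split d hL h1 h2, hda]; simp
  obtain ⟨hx, hy⟩ := compXY hda'
  have hdu : d u = 0 := by rwa [neg_eq_zero] at hx
  have hdv : d v = Y k * u := (sub_eq_zero.mp hy).symm
  obtain ⟨c, s, hsmem, hus⟩ := IH u hu hdu
  have hdv' : d (v - c • (X k * Q k ^ n)) = Y k * d s := by
    rw [map_sub, map_smul, d_X_Qpow d hL h1 h2, hdv, hus]
    simp only [mul_add, mul_smul_comm]
    abel
  have hw : d ((v - c • (X k * Q k ^ n)) + Y k * s) = 0 := by
    rw [map_add, d_Y_mul d hL h2, hdv']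
    exact add_neg_cancel _
  have hwmem : (v - c • (X k * Q k ^ n)) + Y k * s ∈ deg k 2 (2 * n + 1) := by
    refine Submodule.add_mem _ (Submodule.sub_mem _ hv (Submodule.smul_mem _ c (XQpow_mem n))) ?_
    have := deg_mul_mem (k := k) Y_mem hsmem
    rwa [show 1 + 2 * n = 2 * n + 1 by ring] at this
  obtain ⟨c'', t, htmem, hwt⟩ := IH _ hwmem hw
  refine ⟨c, -(X k * s) + c'' • (X k * Q k ^ n) - Y k * t, ?_, ?_⟩
  · refine Submodule.sub_mem _ (Submodule.add_mem _ (Submodule.neg_mem _ ?_)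
      (Submodule.smul_mem _ c'' (XQpow_mem n))) ?_
    · have := deg_mul_mem (k := k) X_mem hsmem
      rwa [show 1 + 2 * n = 2 * n + 1 by ring] at this
    · have := deg_mul_mem (k := k) Y_mem htmem
      rwa [show 1 + (2 * n) = 2 * n + 1 by ring] at this
  · have hdt : d t = (v - c • (X k * Q k ^ n)) + Y k * s - c'' • (Y k * Q k ^ n) := by
      rw [hwt]; abel
    rw [map_sub, map_add, map_neg, map_smul, d_X_mul d hL h1, d_X_Qpow d hL h1 h2,
      d_Y_mul d hL h2, hdt, hus, hQexp d hL h1 h2]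
    simp only [mul_sub, mul_add, mul_neg, mul_smul_comm, smul_sub, smul_add, neg_sub]
    abel

include hL h1 h2 in
lemma aodd : ∀ m : ℕ, ∀ a ∈ deg k 2 (2 * m + 1), d a = 0 →
    ∃ c : k, ∃ b, b ∈ deg k 2 (2 * m) ∧ a = c • (Y k * Q k ^ m) + d b := by
  intro m
  induction m with
  | zero =>
    intro a ha hda
    obtain ⟨u, v, hu, hv, rfl⟩ := decomp (show _ ∈ deg k 2 (0 + 1) from ha)
    obtain ⟨α, hα⟩ := mem_deg0 hu
    obtain ⟨β, hβ⟩ := mem_deg0 hv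
    have hda' : X k * (-(d u)) + Y k * (Y k * u - d v) = X k * 0 + Y k * 0 := by
      rw [← d_split d hL h1 h2, hda]; simp
    obtain ⟨hx, hy⟩ := compXY hda'
    have hYu : Y k * u = 0 := by
      rw [d_deg0 d hL hv, sub_zero] at hy; exact hy
    have hα0 : α = 0 := by
      rw [hα, mul_smul_comm, mul_one] at hYu
      rcases smul_eq_zero.mp hYu with h | h
      · exact h
      · exact absurd h (Y_ne_zero (k := k))
    refine ⟨β, 0, Submodule.zero_mem _, ?_⟩
    rw [map_zero, add_zero, hα, hβ, hα0]
    simp [mul_smul_comm]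
  | succ n ih =>
    intro a ha hda
    have aev := aeven_of_aodd d hL h1 h2 n ih
    have ha' : a ∈ deg k 2 ((2 * n + 1 + 1) + 1) := by
      rwa [show (2 * n + 1 + 1) + 1 = 2 * (n + 1) + 1 by ring]
    obtain ⟨u, v, hu, hv, rfl⟩ := decomp ha'
    rw [show (2 * n + 1 + 1) = 2 * n + 2 by ring] at hu hv
    have hda' : X k * (-(d u)) + Y k * (Y k * u - d v) = X k * 0 + Y k * 0 := by
      rw [← d_split d hL h1 h2, hda]; simp
    obtain ⟨hx, hy⟩ := compXY hda'
    have hdu : d u = 0 := by rwa [neg_eq_zero] at hx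
    have hdv : d v = Y k * u := (sub_eq_zero.mp hy).symm
    have hu' : u ∈ deg k 2 (2 * n + 1 + 1) := by rwa [show 2 * n + 1 + 1 = 2 * n + 2 by ring]
    obtain ⟨c, s, hsmem, hus⟩ := aev u hu' hdu
    have hkey : d (v + Y k * s) = c • (Y k * Q k ^ (n+1)) := by
      rw [map_add, d_Y_mul d hL h2, hdv, hus]
      simp only [mul_add, mul_smul_comm]
      abel
    have hmem2 : v + Y k * s ∈ deg k 2 (2 * (n + 1)) := by
      refine Submodule.add_mem _ (by rwa [show 2 * (n + 1) = 2 * n + 2 by ring]) ?_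
      have := deg_mul_mem (k := k) Y_mem hsmem
      rwa [show 1 + (2 * n + 1) = 2 * (n + 1) by ring] at this
    have hc0 : c = 0 := bodd d hL h1 h2 (n+1) c _ hmem2 hkey
    rw [hc0, zero_smul, zero_add] at hus
    have hw0 : d (v + Y k * s) = 0 := by rw [hkey, hc0, zero_smul]
    have hmem2' : v + Y k * s ∈ deg k 2 (2 * n + 1 + 1) := by
      rwa [show 2 * n + 1 + 1 = 2 * (n + 1) by ring]
    obtain ⟨c', t, htmem, hwt⟩ := aev _ hmem2' hw0
    refine ⟨c', -(X k * s) - Y k * t, ?_, ?_⟩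
    · refine Submodule.sub_mem _ (Submodule.neg_mem _ ?_) ?_
      · have := deg_mul_mem (k := k) X_mem hsmem
        rwa [show 1 + (2 * n + 1) = 2 * (n + 1) by ring] at this
      · have := deg_mul_mem (k := k) Y_mem htmem
        rwa [show 1 + (2 * n + 1) = 2 * (n + 1) by ring] at this
    · have hdt : d t = v + Y k * s - c' • Q k ^ (n+1) := by rw [hwt]; abel
      rw [map_sub, map_neg, d_X_mul d hL h1, d_Y_mul d hL h2, hdt, hus]
      simp only [mul_sub, mul_add, mul_neg, mul_smul_comm, smul_sub, smul_add, neg_sub]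
      abel

end Diff

/-- the cochain DG algebra `B₆` on `k⟨x₁,x₂⟩` with
`∂(x₁) = x₂²`, `∂(x₂) = 0` has cohomology `H⁰ = k`,
`H^{2n−1} = k·⌈x₂(x₁x₂+x₂x₁)^{n−1}⌉` and `H^{2n} = k·⌈(x₁x₂+x₂x₁)^n⌉`
for `n ≥ 1`; moreover the classes of `x₂` and of `x₁x₂+x₂x₁` commute in
`H(B₆)` (indeed `x₂q − qx₂ = ∂(x₁²)`) and `⌈x₂⌉² = 0` (indeed `x₂² = ∂x₁`),
so `H(B₆) ≅ k[⌈x₂⌉, ⌈x₁x₂+x₂x₁⌉]/(⌈x₂⌉²)`. -/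
theorem stmt11 {k : Type*} [Field k] [CharZero k]
    (d : FreeAlgebra k (Fin 2) →ₗ[k] FreeAlgebra k (Fin 2))
    (hL : ∀ (p : ℕ) (a b : FreeAlgebra k (Fin 2)), a ∈ deg k 2 p →
      d (a * b) = d a * b + ((-1 : k) ^ p) • (a * d b))
    (h1 : d (X k) = Y k * Y k)
    (h2 : d (Y k) = 0)
    (hdd : ∀ x, d (d x) = 0) :
    (∀ a ∈ deg k 2 0, d a = 0) ∧
    (∀ n : ℕ, 1 ≤ n →
      (Y k * (Q k) ^ (n - 1) ∈ deg k 2 (2 * n - 1) ∧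
        d (Y k * (Q k) ^ (n - 1)) = 0 ∧
        (¬ ∃ b ∈ deg k 2 (2 * n - 2), d b = Y k * (Q k) ^ (n - 1)) ∧
        (∀ a ∈ deg k 2 (2 * n - 1), d a = 0 →
          ∃ c : k, ∃ b ∈ deg k 2 (2 * n - 2),
            a = c • (Y k * (Q k) ^ (n - 1)) + d b)) ∧
      ((Q k) ^ n ∈ deg k 2 (2 * n) ∧
        d ((Q k) ^ n) = 0 ∧
        (¬ ∃ b ∈ deg k 2 (2 * n - 1), d b = (Q k) ^ n) ∧
        (∀ a ∈ deg k 2 (2 * n), d a = 0 →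
          ∃ c : k, ∃ b ∈ deg k 2 (2 * n - 1), a = c • (Q k) ^ n + d b))) ∧
    (Y k * Q k - Q k * Y k = d (X k * X k)) ∧
    (Y k * Y k = d (X k)) := by
  refine ⟨fun a ha => d_deg0 d hL ha, ?_, ?_, h1.symm⟩
  · intro n hn
    obtain ⟨m, rfl⟩ : ∃ m, n = m + 1 := ⟨n - 1, by omega⟩
    have e1 : 2 * (m + 1) - 1 = 2 * m + 1 := by omega
    have e2 : 2 * (m + 1) - 2 = 2 * m := by omega
    have e3 : (m + 1) - 1 = m := by omega
    rw [e1, e2, e3]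
    constructor
    · refine ⟨YQpow_mem m, d_Y_Qpow d hL h1 h2 m, ?_, ?_⟩
      · rintro ⟨b, hb, hdb⟩
        exact one_ne_zero (bodd d hL h1 h2 m 1 b hb (by rw [hdb, one_smul]))
      · intro a ha hda
        obtain ⟨c, b, hb, hab⟩ := aodd d hL h1 h2 m a ha hda
        exact ⟨c, b, hb, hab⟩
    · refine ⟨Qpow_mem (m + 1), d_Qpow d hL h1 h2 (m + 1), ?_, ?_⟩
      · rintro ⟨b, hb, hdb⟩
        exact one_ne_zero (beven d hL h1 h2 m 1 b hb (by rw [hdb, one_smul]))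
      · intro a ha hda
        have ha' : a ∈ deg k 2 (2 * m + 1 + 1) := by
          rwa [show 2 * m + 1 + 1 = 2 * (m + 1) by ring]
        obtain ⟨c, b, hb, hab⟩ :=
          aeven_of_aodd d hL h1 h2 m (aodd d hL h1 h2 m) a ha' hda
        exact ⟨c, b, hb, hab⟩
  · rw [d_X_mul d hL h1, h1, Q]
    noncomm_ring
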